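/- Let m↑, m↓ : [0,α] → [0,∞) with m↑ non-decreasing and m↓ non-increasing, m_w(a,b) = m↑(a)·m↓(b), and m(s) = m_w(s,s). Define μ(x,y) = (H'(x)−H'(y))/(Λ'(x)−Λ'(y)) for x ≠ y and μ(x,x) = m(x), where H, Λ are C² convex on (0,α) with m·Λ'' = H'' and Λ'' > 0 on (0,α). Then for all x, y ∈ (0,α): m_w(min(x,y), max(x,y)) ≤ μ(x,y) ≤ m_w(max(x,y), min(x,y)). -/

import Mathlib

open Set

lemma eaw_aux (α : ℝ) (mu md H Λ : ℝ → ℝ)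
    (hmu : MonotoneOn mu (Icc 0 α)) (hmd : AntitoneOn md (Icc 0 α))
    (hmunn : ∀ s ∈ Icc 0 α, 0 ≤ mu s) (hmdnn : ∀ s ∈ Icc 0 α, 0 ≤ md s)
    (hH : ContDiffOn ℝ 2 H (Ioo 0 α)) (hΛ : ContDiffOn ℝ 2 Λ (Ioo 0 α))
    (hΛ'' : ∀ s ∈ Ioo 0 α, 0 < deriv (deriv Λ) s)
    (heq : ∀ s ∈ Ioo 0 α, mu s * md s * deriv (deriv Λ) s = deriv (deriv H) s)
    (x y : ℝ) (hx : x ∈ Ioo 0 α) (hy : y ∈ Ioo 0 α) (hxy : x < y) :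
    deriv Λ x < deriv Λ y ∧
    mu x * md y * (deriv Λ y - deriv Λ x) ≤ deriv H y - deriv H x ∧
    deriv H y - deriv H x ≤ mu y * md x * (deriv Λ y - deriv Λ x) := by
  have hsub : Icc x y ⊆ Ioo 0 α := fun t ht => ⟨lt_of_lt_of_le hx.1 ht.1, lt_of_le_of_lt ht.2 hy.2⟩
  have hsub' : Ioo 0 α ⊆ Icc 0 α := Ioo_subset_Icc_self
  have hΛ1 : ContDiffOn ℝ 1 (deriv Λ) (Ioo 0 α) :=
    hΛ.deriv_of_isOpen isOpen_Ioo (by norm_num)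
  have hH1 : ContDiffOn ℝ 1 (deriv H) (Ioo 0 α) :=
    hH.deriv_of_isOpen isOpen_Ioo (by norm_num)
  have hΛmono : StrictMonoOn (deriv Λ) (Ioo 0 α) := by
    apply strictMonoOn_of_deriv_pos (convex_Ioo 0 α) hΛ1.continuousOn
    intro t ht
    rw [interior_Ioo] at ht
    exact hΛ'' t ht
  refine ⟨hΛmono hx hy hxy, ?_, ?_⟩
  · -- lower bound
    set c := mu x * md y with hc
    have hmono : MonotoneOn (fun t => deriv H t - c * deriv Λ t) (Icc x y) := by
      apply monotoneOn_of_deriv_nonneg (convex_Icc x y)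
      · exact (hH1.continuousOn.sub (hΛ1.continuousOn.const_smul c)).mono hsub
      · intro t ht
        rw [interior_Icc] at ht
        have ht' : t ∈ Ioo 0 α := hsub (Ioo_subset_Icc_self ht)
        have h1 : DifferentiableAt ℝ (deriv H) t :=
          (hH1.differentiableOn one_ne_zero).differentiableAt (isOpen_Ioo.mem_nhds ht')
        have h2 : DifferentiableAt ℝ (deriv Λ) t :=
          (hΛ1.differentiableOn one_ne_zero).differentiableAt (isOpen_Ioo.mem_nhds ht')
        exact (h1.sub (h2.const_mul c)).differentiableWithinAt
      · intro t ht
        rw [interior_Icc] at ht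
        have ht' : t ∈ Ioo 0 α := hsub (Ioo_subset_Icc_self ht)
        have h1 : DifferentiableAt ℝ (deriv H) t :=
          (hH1.differentiableOn one_ne_zero).differentiableAt (isOpen_Ioo.mem_nhds ht')
        have h2 : DifferentiableAt ℝ (deriv Λ) t :=
          (hΛ1.differentiableOn one_ne_zero).differentiableAt (isOpen_Ioo.mem_nhds ht')
        rw [deriv_fun_sub h1 (h2.const_mul c), deriv_const_mul c h2]
        have hmb : c ≤ mu t * md t := by
          apply mul_le_mul (hmu (hsub' hx) (hsub' ht') (le_of_lt ht.1))
            (hmd (hsub' ht') (hsub' hy) (le_of_lt ht.2)) (hmdnn y (hsub' hy))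
            (hmunn t (hsub' ht'))
        nlinarith [hΛ'' t ht', heq t ht']
    have := hmono (left_mem_Icc.2 hxy.le) (right_mem_Icc.2 hxy.le) hxy.le
    simp only at this
    nlinarith
  · -- upper bound
    set c := mu y * md x with hc
    have hmono : MonotoneOn (fun t => c * deriv Λ t - deriv H t) (Icc x y) := by
      apply monotoneOn_of_deriv_nonneg (convex_Icc x y)
      · exact ((hΛ1.continuousOn.const_smul c).sub hH1.continuousOn).mono hsub
      · intro t ht
        rw [interior_Icc] at ht
        have ht' : t ∈ Ioo 0 α := hsub (Ioo_subset_Icc_self ht)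
        have h1 : DifferentiableAt ℝ (deriv H) t :=
          (hH1.differentiableOn one_ne_zero).differentiableAt (isOpen_Ioo.mem_nhds ht')
        have h2 : DifferentiableAt ℝ (deriv Λ) t :=
          (hΛ1.differentiableOn one_ne_zero).differentiableAt (isOpen_Ioo.mem_nhds ht')
        exact ((h2.const_mul c).sub h1).differentiableWithinAt
      · intro t ht
        rw [interior_Icc] at ht
        have ht' : t ∈ Ioo 0 α := hsub (Ioo_subset_Icc_self ht)
        have h1 : DifferentiableAt ℝ (deriv H) t :=
          (hH1.differentiableOn one_ne_zero).differentiableAt (isOpen_Ioo.mem_nhds ht')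
        have h2 : DifferentiableAt ℝ (deriv Λ) t :=
          (hΛ1.differentiableOn one_ne_zero).differentiableAt (isOpen_Ioo.mem_nhds ht')
        rw [deriv_fun_sub (h2.const_mul c) h1, deriv_const_mul c h2]
        have hmb : mu t * md t ≤ c := by
          apply mul_le_mul (hmu (hsub' ht') (hsub' hy) (le_of_lt ht.2))
            (hmd (hsub' hx) (hsub' ht') (le_of_lt ht.1)) (hmdnn t (hsub' ht'))
            (hmunn y (hsub' hy))
        nlinarith [hΛ'' t ht', heq t ht']
    have := hmono (left_mem_Icc.2 hxy.le) (right_mem_Icc.2 hxy.le) hxy.le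
    simp only at this
    nlinarith

/-- The generalised entropic average μ lies between the two upwind mobilities. -/
theorem entropic_average_between_upwind
    (α : ℝ) (hα : 0 < α) (mu md H Λ : ℝ → ℝ) (μ : ℝ → ℝ → ℝ)
    (hmu : MonotoneOn mu (Icc 0 α)) (hmd : AntitoneOn md (Icc 0 α))
    (hmunn : ∀ s ∈ Icc 0 α, 0 ≤ mu s) (hmdnn : ∀ s ∈ Icc 0 α, 0 ≤ md s)
    (hH : ContDiffOn ℝ 2 H (Ioo 0 α)) (hΛ : ContDiffOn ℝ 2 Λ (Ioo 0 α))
    (hHconv : ConvexOn ℝ (Ioo 0 α) H) (hΛ'' : ∀ s ∈ Ioo 0 α, 0 < deriv (deriv Λ) s)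
    (heq : ∀ s ∈ Ioo 0 α, mu s * md s * deriv (deriv Λ) s = deriv (deriv H) s)
    (hμ : ∀ x y : ℝ, x ≠ y → μ x y = (deriv H x - deriv H y) / (deriv Λ x - deriv Λ y))
    (hμdiag : ∀ x : ℝ, μ x x = mu x * md x) :
    ∀ x ∈ Ioo 0 α, ∀ y ∈ Ioo 0 α,
      mu (min x y) * md (max x y) ≤ μ x y ∧ μ x y ≤ mu (max x y) * md (min x y) := by
  intro x hx y hy
  rcases lt_trichotomy x y with h | h | h
  · obtain ⟨hd, hl, hu⟩ := eaw_aux α mu md H Λ hmu hmd hmunn hmdnn hH hΛ hΛ'' heq x y hx hy h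
    have hne : x ≠ y := ne_of_lt h
    rw [hμ x y hne, min_eq_left h.le, max_eq_right h.le]
    have hdd : 0 < deriv Λ y - deriv Λ x := sub_pos.2 hd
    have hform : (deriv H x - deriv H y) / (deriv Λ x - deriv Λ y)
        = (deriv H y - deriv H x) / (deriv Λ y - deriv Λ x) := by
      rw [← neg_sub (deriv H y), ← neg_sub (deriv Λ y), neg_div_neg_eq]
    rw [hform]
    constructor
    · rw [le_div_iff₀ hdd]; exact hl
    · rw [div_le_iff₀ hdd]; exact hu
  · subst h
    simp [hμdiag x]
  · obtain ⟨hd, hl, hu⟩ := eaw_aux α mu md H Λ hmu hmd hmunn hmdnn hH hΛ hΛ'' heq y x hy hx h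
    have hne : x ≠ y := ne_of_gt h
    rw [hμ x y hne, min_eq_right h.le, max_eq_left h.le]
    have hdd : 0 < deriv Λ x - deriv Λ y := sub_pos.2 hd
    constructor
    · rw [le_div_iff₀ hdd]; exact hl
    · rw [div_le_iff₀ hdd]; exact hu
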